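/- Let g(x,y,z) = x⁴ + y⁴ + z⁴ − 2√2·x²yz on ℝ³. Then the set G₁(g) = {(x,y,z) ∈ ℝ³ : g(x,y,z) ≤ 1} is unbounded (it contains the lines {y = z, x = 2^{1/4} y} and {y = z, x = −2^{1/4} y}), yet |G₁(g)| < +∞; equivalently, ∫_{ℝ³} exp(−g(x,y,z)) dx dy dz < +∞. -/

import Mathlib

open MeasureTheory Real Set

noncomputable section

/-- The polynomial `g(x,y,z) = x⁴ + y⁴ + z⁴ - 2√2·x²yz` on `ℝ³`. -/
def g8 (p : Fin 3 → ℝ) : ℝ :=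
  p 0 ^ 4 + p 1 ^ 4 + p 2 ^ 4 - 2 * Real.sqrt 2 * p 0 ^ 2 * p 1 * p 2

namespace Stmt8Aux

lemma s2_sq : Real.sqrt 2 ^ 2 = 2 := Real.sq_sqrt (by norm_num)
lemma s2_pos : (0:ℝ) < Real.sqrt 2 := Real.sqrt_pos.mpr (by norm_num)
lemma s2_ne : Real.sqrt 2 ≠ 0 := ne_of_gt s2_pos

lemma sqrt_pi_le_two : Real.sqrt π ≤ 2 := by
  rw [show (2:ℝ) = Real.sqrt 4 by rw [show (4:ℝ) = 2^2 by norm_num, Real.sqrt_sq (by norm_num)]]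
  exact Real.sqrt_le_sqrt (by linarith [Real.pi_le_four])

lemma exp_one_le_three : Real.exp 1 ≤ 3 := by
  have := Real.exp_one_lt_d9
  linarith

lemma g8_apply (x y z : ℝ) : g8 ![x, y, z] = x^4 + y^4 + z^4 - 2*Real.sqrt 2*x^2*y*z := by
  simp [g8]

lemma g8_line (s e : ℝ) (he : e^2 = Real.sqrt 2) : g8 ![e * s, s, s] = 0 := by
  rw [g8_apply]
  have h2 := s2_sq
  linear_combination s^4*(e^2 - Real.sqrt 2)*he - s^4*h2

lemma q_sq : ((2:ℝ) ^ ((1:ℝ)/4)) ^ 2 = Real.sqrt 2 := by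
  rw [← Real.rpow_natCast ((2:ℝ) ^ ((1:ℝ)/4)) 2, ← Real.rpow_mul (by norm_num)]
  rw [show (1:ℝ)/4 * (2:ℕ) = 1/2 by push_cast; ring]
  rw [← Real.sqrt_eq_rpow]

/-! ### One-dimensional integrability facts -/

lemma L1 {b : ℝ} (hb : 0 < b) {k : ℕ} (hk : 1 ≤ (k:ℝ)) :
    Integrable fun t : ℝ => (Real.sqrt |t|)⁻¹ * Real.exp (-(b * |t| ^ k)) := by
  have base : IntegrableOn (fun t : ℝ => (Real.sqrt |t|)⁻¹ * Real.exp (-(b * |t| ^ k))) (Ioi 0) := by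
    have h := integrableOn_rpow_mul_exp_neg_mul_rpow (s := -(1/2)) (p := (k:ℝ)) (by norm_num) (by linarith) hb
    refine h.congr_fun (fun x hx => ?_) measurableSet_Ioi
    have hx0 : (0:ℝ) < x := hx
    dsimp only
    rw [abs_of_pos hx0, Real.rpow_natCast, Real.rpow_neg hx0.le, ← Real.sqrt_eq_rpow, neg_mul]
  have neg : IntegrableOn (fun t : ℝ => (Real.sqrt |t|)⁻¹ * Real.exp (-(b * |t| ^ k))) (Iio 0) := by
    rw [← (Measure.measurePreserving_neg (volume : Measure ℝ)).integrableOn_comp_preimage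
        (Homeomorph.neg ℝ).measurableEmbedding]
    simpa only [Function.comp_def, abs_neg, neg_preimage, neg_Iio, neg_zero] using base
  rw [← integrableOn_univ, ← Iio_union_Ici (a := (0:ℝ)), integrableOn_union,
    integrableOn_Ici_iff_integrableOn_Ioi]
  exact ⟨neg, base⟩

lemma lint_gauss (b m : ℝ) (hb : 0 < b) :
    ∫⁻ x : ℝ, ENNReal.ofReal (Real.exp (-(b * (x - m)^2))) = ENNReal.ofReal (Real.sqrt (π / b)) := by
  have hint : Integrable (fun x : ℝ => Real.exp (-(b * (x - m)^2))) := by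
    have h := (integrable_exp_neg_mul_sq hb).comp_sub_right m
    simpa [neg_mul] using h
  rw [← ofReal_integral_eq_lintegral_ofReal hint (ae_of_all _ fun x => (Real.exp_pos _).le)]
  congr 1
  calc ∫ x : ℝ, Real.exp (-(b * (x - m)^2))
      = ∫ x : ℝ, Real.exp (-b * x^2) := by
        rw [← integral_sub_right_eq_self (fun x : ℝ => Real.exp (-b * x^2)) m]
        simp [neg_mul]
    _ = Real.sqrt (π / b) := integral_gaussian b

/-- The key one-variable estimate: `∫ exp(-(x²-u²/√2)²) dx ≤ 10/√|u|`. -/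
lemma lemA1 {u : ℝ} (hu : u ≠ 0) :
    ∫⁻ x : ℝ, ENNReal.ofReal (Real.exp (-(x^2 - u^2 / Real.sqrt 2)^2))
      ≤ ENNReal.ofReal (10 / Real.sqrt |u|) := by
  have hsu : (0:ℝ) < Real.sqrt |u| := Real.sqrt_pos.mpr (abs_pos.mpr hu)
  by_cases hu1 : |u| ≤ 1
  · have hA : (u^2 / Real.sqrt 2)^2 ≤ 1/2 := by
      rw [div_pow, s2_sq]
      have : u^2 ≤ 1 := by nlinarith [abs_nonneg u, sq_abs u]
      nlinarith [sq_nonneg u]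
    have hpt : ∀ x : ℝ, Real.exp (-(x^2 - u^2 / Real.sqrt 2)^2) ≤ Real.exp 1 * Real.exp (-x^2) := by
      intro x
      rw [← Real.exp_add]
      apply Real.exp_le_exp.mpr
      set A := u^2 / Real.sqrt 2
      nlinarith [sq_nonneg (x^2 - 2*A), sq_nonneg (x^2 - 1), hA, sq_nonneg A]
    calc ∫⁻ x : ℝ, ENNReal.ofReal (Real.exp (-(x^2 - u^2 / Real.sqrt 2)^2))
        ≤ ∫⁻ x : ℝ, ENNReal.ofReal (Real.exp 1 * Real.exp (-(1 * (x - 0)^2))) := by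
          apply lintegral_mono
          intro x
          apply ENNReal.ofReal_le_ofReal
          simpa using hpt x
      _ = ENNReal.ofReal (Real.exp 1) * ENNReal.ofReal (Real.sqrt (π / 1)) := by
          simp_rw [ENNReal.ofReal_mul (Real.exp_pos 1).le]
          rw [lintegral_const_mul' _ _ ENNReal.ofReal_ne_top, lint_gauss 1 0 one_pos]
      _ ≤ ENNReal.ofReal (10 / Real.sqrt |u|) := by
          rw [← ENNReal.ofReal_mul (Real.exp_pos 1).le]
          apply ENNReal.ofReal_le_ofReal
          have h1 : Real.exp 1 * Real.sqrt (π/1) ≤ 6 := by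
            rw [div_one]
            nlinarith [sqrt_pi_le_two, exp_one_le_three, Real.sqrt_nonneg π,
              (Real.exp_pos 1).le]
          have h2 : Real.sqrt |u| ≤ 1 := by
            rw [show (1:ℝ) = Real.sqrt 1 by simp]
            exact Real.sqrt_le_sqrt hu1
          calc Real.exp 1 * Real.sqrt (π/1) ≤ 6 := h1
            _ ≤ 10 / Real.sqrt |u| := by
                rw [le_div_iff₀ hsu]; nlinarith
  · push_neg at hu1
    set a : ℝ := Real.sqrt (u^2 / Real.sqrt 2) with ha
    have ha2 : a^2 = u^2 / Real.sqrt 2 := Real.sq_sqrt (by positivity)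
    have hapos : 0 < a := Real.sqrt_pos.mpr (by positivity)
    have hpt : ∀ x : ℝ, Real.exp (-(x^2 - u^2 / Real.sqrt 2)^2)
        ≤ Real.exp (-(a^2 * (x - a)^2)) + Real.exp (-(a^2 * (x + a)^2)) := by
      intro x
      rcases le_total ((x - a)^2) ((x + a)^2) with h | h
      · have key : a^2 * (x - a)^2 ≤ (x^2 - u^2 / Real.sqrt 2)^2 := by
          rw [← ha2]
          nlinarith [sq_nonneg (x - a), sq_nonneg (x + a), hapos.le]
        have := Real.exp_le_exp.mpr (neg_le_neg key)
        linarith [(Real.exp_pos (-(a^2 * (x + a)^2))).le]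
      · have key : a^2 * (x + a)^2 ≤ (x^2 - u^2 / Real.sqrt 2)^2 := by
          rw [← ha2]
          nlinarith [sq_nonneg (x - a), sq_nonneg (x + a), hapos.le]
        have := Real.exp_le_exp.mpr (neg_le_neg key)
        linarith [(Real.exp_pos (-(a^2 * (x - a)^2))).le]
    calc ∫⁻ x : ℝ, ENNReal.ofReal (Real.exp (-(x^2 - u^2 / Real.sqrt 2)^2))
        ≤ ∫⁻ x : ℝ, (ENNReal.ofReal (Real.exp (-(a^2 * (x - a)^2)))
            + ENNReal.ofReal (Real.exp (-(a^2 * (x - (-a))^2)))) := by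
          apply lintegral_mono
          intro x
          calc ENNReal.ofReal (Real.exp (-(x^2 - u^2 / Real.sqrt 2)^2))
              ≤ ENNReal.ofReal (Real.exp (-(a^2 * (x - a)^2)) + Real.exp (-(a^2 * (x + a)^2))) :=
                ENNReal.ofReal_le_ofReal (hpt x)
            _ ≤ _ := by
                rw [show x + a = x - (-a) by ring]
                exact ENNReal.ofReal_add_le
      _ = ENNReal.ofReal (Real.sqrt (π / a^2)) + ENNReal.ofReal (Real.sqrt (π / a^2)) := by
          rw [lintegral_add_left]
          · rw [lint_gauss (a^2) a (by positivity), lint_gauss (a^2) (-a) (by positivity)]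
          · apply Measurable.ennreal_ofReal
            fun_prop
      _ ≤ ENNReal.ofReal (10 / Real.sqrt |u|) := by
          rw [← ENNReal.ofReal_add (Real.sqrt_nonneg _) (Real.sqrt_nonneg _)]
          apply ENNReal.ofReal_le_ofReal
          have hfrac : π / a^2 ≤ 25 / |u| := by
            rw [ha2, div_div_eq_mul_div, div_le_div_iff₀ (by positivity) (abs_pos.mpr hu)]
            have hu2 : |u| ≤ u^2 := by nlinarith [sq_abs u]
            have hs2le : Real.sqrt 2 ≤ 2 := by nlinarith [s2_sq, s2_pos]
            have h0 : π * Real.sqrt 2 ≤ 8 := by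
              nlinarith [Real.pi_le_four, s2_pos, Real.pi_pos]
            have h1 : π * Real.sqrt 2 * |u| ≤ 4 * 2 * |u| := by
              nlinarith [h0, abs_nonneg u]
            nlinarith [hu2, abs_nonneg u]
          have h5 : Real.sqrt (π / a^2) ≤ 5 / Real.sqrt |u| := by
            calc Real.sqrt (π / a^2) ≤ Real.sqrt (25 / |u|) := Real.sqrt_le_sqrt hfrac
              _ = 5 / Real.sqrt |u| := by
                  rw [Real.sqrt_div' 25 (abs_nonneg u),
                    show (25:ℝ) = 5^2 by norm_num, Real.sqrt_sq (by norm_num : (0:ℝ) ≤ 5)]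
          calc Real.sqrt (π / a^2) + Real.sqrt (π / a^2)
              ≤ 5 / Real.sqrt |u| + 5 / Real.sqrt |u| := add_le_add h5 h5
            _ = 10 / Real.sqrt |u| := by ring

/-! ### The scaling step in `u` -/

def f3 : ℝ → ℝ := fun t => (Real.sqrt |t|)⁻¹ * Real.exp (-(3 * t^2))

lemma hf3 : Integrable f3 := by
  have := L1 (b := 3) (by norm_num) (k := 2) (by norm_num)
  refine this.congr (ae_of_all _ fun t => ?_)
  simp [f3, sq_abs]

def C3 : ℝ := ∫ t : ℝ, f3 t

lemma C3_nonneg : 0 ≤ C3 :=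
  integral_nonneg fun t => mul_nonneg (inv_nonneg.mpr (Real.sqrt_nonneg _)) (Real.exp_pos _).le

lemma lemB {v : ℝ} (hv : v ≠ 0) :
    ∫⁻ u : ℝ, ENNReal.ofReal (Real.exp (-(3 * u^2 * v^2)) * (10 / Real.sqrt |u|))
      = ENNReal.ofReal (10 * C3 / Real.sqrt |v|) := by
  have hsv : (0:ℝ) < Real.sqrt |v| := Real.sqrt_pos.mpr (abs_pos.mpr hv)
  have hkey : ∀ u : ℝ, Real.exp (-(3 * u^2 * v^2)) * (10 / Real.sqrt |u|)
      = 10 * Real.sqrt |v| * f3 (v * u) := by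
    intro u
    rcases eq_or_ne u 0 with rfl | hu
    · simp [f3]
    · have hsu : (0:ℝ) < Real.sqrt |u| := Real.sqrt_pos.mpr (abs_pos.mpr hu)
      unfold f3
      rw [abs_mul, Real.sqrt_mul (abs_nonneg v)]
      rw [show -(3 * (v*u)^2) = -(3 * u^2 * v^2) by ring]
      field_simp
  simp_rw [hkey]
  have hint : Integrable (fun u : ℝ => 10 * Real.sqrt |v| * f3 (v * u)) :=
    (hf3.comp_mul_left' hv).const_mul _
  rw [← ofReal_integral_eq_lintegral_ofReal hint (ae_of_all _ fun u =>
    mul_nonneg (by positivity)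
      (mul_nonneg (inv_nonneg.mpr (Real.sqrt_nonneg _)) (Real.exp_pos _).le))]
  congr 1
  rw [MeasureTheory.integral_const_mul, Measure.integral_comp_mul_left f3 v]
  rw [smul_eq_mul, abs_inv, ← C3]
  have hvv : Real.sqrt |v| * Real.sqrt |v| = |v| := Real.mul_self_sqrt (abs_nonneg v)
  have hv0 : |v| ≠ 0 := abs_ne_zero.mpr hv
  field_simp
  nlinarith [hvv, C3_nonneg]

/-! ### The measure-preserving change of variables -/

def Mmat : Matrix (Fin 3) (Fin 3) ℝ :=
  !![0, 0, 1; (Real.sqrt 2)⁻¹, (Real.sqrt 2)⁻¹, 0; -(Real.sqrt 2)⁻¹, (Real.sqrt 2)⁻¹, 0]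

lemma Mmat_det : Mmat.det = 1 := by
  have h : (Real.sqrt 2)⁻¹ * (Real.sqrt 2)⁻¹ = 1/2 := by
    rw [← mul_inv, Real.mul_self_sqrt (by norm_num)]
    norm_num
  simp [Mmat, Matrix.det_fin_three, Matrix.vecHead, Matrix.vecTail]
  nlinarith [h]

def Tlin : (Fin 3 → ℝ) →ₗ[ℝ] (Fin 3 → ℝ) := Matrix.toLin' Mmat

lemma Tlin_det : LinearMap.det Tlin = 1 := by
  rw [Tlin, LinearMap.det_toLin', Mmat_det]

lemma hT : MeasurePreserving Tlin volume volume := by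
  refine ⟨Tlin.continuous_of_finiteDimensional.measurable, ?_⟩
  rw [Real.map_linearMap_volume_pi_eq_smul_volume_pi (by rw [Tlin_det]; norm_num), Tlin_det]
  simp

def eqv : (Fin 3 → ℝ) ≃ᵐ ℝ × (ℝ × ℝ) :=
  (MeasurableEquiv.piFinSuccAbove (fun _ : Fin 3 => ℝ) 0).trans
    ((MeasurableEquiv.refl ℝ).prodCongr (MeasurableEquiv.finTwoArrow))

lemma heqv : MeasurePreserving eqv volume volume := by
  have h1 := volume_preserving_piFinSuccAbove (fun _ : Fin 3 => ℝ) 0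
  have h2 := (MeasurePreserving.id (volume : Measure ℝ)).prod
    (volume_preserving_finTwoArrow ℝ)
  exact h2.comp h1

def Lmap : ℝ × (ℝ × ℝ) → (Fin 3 → ℝ) := fun q => Tlin (eqv.symm q)

lemma hL : MeasurePreserving Lmap volume volume := hT.comp (heqv.symm eqv)

lemma Lmap_apply (v u x : ℝ) :
    Lmap (v, (u, x)) = ![x, (u + v) / Real.sqrt 2, (u - v) / Real.sqrt 2] := by
  have hsymm : eqv.symm (v, (u, x)) = ![v, u, x] := by
    funext i
    fin_cases i <;>
      simp [eqv, MeasurableEquiv.piFinSuccAbove, MeasurableEquiv.finTwoArrow,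
        MeasurableEquiv.prodCongr, MeasurableEquiv.trans, MeasurableEquiv.refl,
        Fin.insertNthEquiv, Equiv.prodCongr] <;> rfl
  rw [Lmap, hsymm]
  funext i
  fin_cases i <;>
    simp [Tlin, Mmat, Matrix.toLin'_apply, Matrix.mulVec, dotProduct,
      Fin.sum_univ_three, div_eq_mul_inv] <;> ring

/-! ### The key algebraic identity -/

lemma key_poly (s x u v : ℝ) (hs : s^2 = 2) (hs0 : s ≠ 0) :
    x^4 + ((u+v)/s)^4 + ((u-v)/s)^4 - 2*s*x^2*((u+v)/s)*((u-v)/s)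
      = (x^2 - u^2/s)^2 + s*x^2*v^2 + 3*u^2*v^2 + v^4/2 := by
  have h : ∀ w : ℝ, w / s = w * s / 2 := fun w => by
    rw [div_eq_div_iff hs0 two_ne_zero]; linear_combination (-w) * hs
  rw [h (u+v), h (u-v), h (u^2)]
  linear_combination ((2*u^4+12*u^2*v^2+2*v^4)/16*(s^2+2) - x^2*(u^2-v^2)*s/2 - u^4/4) * hs

lemma key_id (x u v : ℝ) :
    g8 ![x, (u+v)/Real.sqrt 2, (u-v)/Real.sqrt 2]
      = (x^2 - u^2 / Real.sqrt 2)^2 + Real.sqrt 2 * x^2 * v^2 + 3*u^2*v^2 + v^4/2 := by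
  rw [g8_apply]
  linear_combination key_poly (Real.sqrt 2) x u v s2_sq s2_ne

def Fq (q : ℝ × ℝ × ℝ) : ℝ :=
  (q.2.2^2 - q.2.1^2 / Real.sqrt 2)^2 + Real.sqrt 2 * q.2.2^2 * q.1^2
    + 3 * q.2.1^2 * q.1^2 + q.1^4 / 2

/-! ### Main integrability -/

lemma main_integrable : Integrable (fun p : Fin 3 → ℝ => Real.exp (-g8 p)) := by
  have hcontg : Continuous g8 := by unfold g8; fun_prop
  have hcont : Continuous fun p : Fin 3 → ℝ => Real.exp (-g8 p) :=
    Real.continuous_exp.comp hcontg.neg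
  rw [← hL.integrable_comp hcont.aestronglyMeasurable]
  have hform : ((fun p : Fin 3 → ℝ => Real.exp (-g8 p)) ∘ Lmap)
      = fun q : ℝ × ℝ × ℝ => Real.exp (-Fq q) := by
    funext q
    obtain ⟨v, u, x⟩ := q
    simp only [Function.comp_apply, Lmap_apply]
    rw [key_id]
    rfl
  rw [hform]
  have hFc : Continuous Fq := by unfold Fq; fun_prop
  have hmeas : Measurable fun q : ℝ × ℝ × ℝ => ENNReal.ofReal (Real.exp (-Fq q)) :=
    (Real.continuous_exp.comp hFc.neg).measurable.ennreal_ofReal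
  refine ⟨(Real.continuous_exp.comp hFc.neg).aestronglyMeasurable, ?_⟩
  rw [hasFiniteIntegral_iff_ofReal (ae_of_all _ fun q => (Real.exp_pos _).le)]
  have hae : ∀ᵐ t : ℝ, t ≠ 0 := by
    rw [ae_iff]
    have : {a : ℝ | ¬ a ≠ 0} = {0} := by ext a; simp
    rw [this]
    exact Real.volume_singleton
  calc ∫⁻ q : ℝ × ℝ × ℝ, ENNReal.ofReal (Real.exp (-Fq q))
      = ∫⁻ v : ℝ, ∫⁻ w : ℝ × ℝ, ENNReal.ofReal (Real.exp (-Fq (v, w))) := by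
        rw [Measure.volume_eq_prod, lintegral_prod _ hmeas.aemeasurable]
    _ = ∫⁻ v : ℝ, ∫⁻ u : ℝ, ∫⁻ x : ℝ, ENNReal.ofReal (Real.exp (-Fq (v, (u, x)))) := by
        refine lintegral_congr fun v => ?_
        rw [Measure.volume_eq_prod]
        exact lintegral_prod _ ((hmeas.comp measurable_prodMk_left).aemeasurable)
    _ ≤ ∫⁻ v : ℝ, ENNReal.ofReal (Real.exp (-(v^4/2)) * (10 * C3 / Real.sqrt |v|)) := by
        refine lintegral_mono_ae (hae.mono fun v hv => ?_)
        calc ∫⁻ u : ℝ, ∫⁻ x : ℝ, ENNReal.ofReal (Real.exp (-Fq (v, (u, x))))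
            ≤ ∫⁻ u : ℝ, ENNReal.ofReal (Real.exp (-(v^4/2)))
                * ENNReal.ofReal (Real.exp (-(3*u^2*v^2)) * (10 / Real.sqrt |u|)) := by
              refine lintegral_mono_ae (hae.mono fun u hu => ?_)
              calc ∫⁻ x : ℝ, ENNReal.ofReal (Real.exp (-Fq (v, (u, x))))
                  ≤ ∫⁻ x : ℝ, ENNReal.ofReal (Real.exp (-(v^4/2)) * Real.exp (-(3*u^2*v^2)))
                      * ENNReal.ofReal (Real.exp (-(x^2 - u^2 / Real.sqrt 2)^2)) := by
                    refine lintegral_mono fun x => ?_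
                    dsimp only
                    rw [← ENNReal.ofReal_mul (by positivity)]
                    apply ENNReal.ofReal_le_ofReal
                    have hterm : 0 ≤ Real.sqrt 2 * x^2 * v^2 := by positivity
                    have hFlb : -(Fq (v,(u,x)))
                        ≤ (-(v^4/2)) + (-(3*u^2*v^2)) + (-((x^2 - u^2 / Real.sqrt 2)^2)) := by
                      unfold Fq
                      simp only
                      nlinarith [hterm]
                    calc Real.exp (-Fq (v,(u,x)))
                        ≤ Real.exp ((-(v^4/2)) + (-(3*u^2*v^2))
                            + (-((x^2 - u^2 / Real.sqrt 2)^2))) := Real.exp_le_exp.mpr hFlb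
                      _ = Real.exp (-(v^4/2)) * Real.exp (-(3*u^2*v^2))
                          * Real.exp (-((x^2 - u^2 / Real.sqrt 2)^2)) := by
                          rw [Real.exp_add, Real.exp_add]
                _ = ENNReal.ofReal (Real.exp (-(v^4/2)) * Real.exp (-(3*u^2*v^2)))
                    * ∫⁻ x : ℝ, ENNReal.ofReal (Real.exp (-(x^2 - u^2 / Real.sqrt 2)^2)) :=
                    lintegral_const_mul' _ _ ENNReal.ofReal_ne_top
                _ ≤ ENNReal.ofReal (Real.exp (-(v^4/2)) * Real.exp (-(3*u^2*v^2)))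
                    * ENNReal.ofReal (10 / Real.sqrt |u|) := mul_le_mul_right (lemA1 hu) _
                _ = ENNReal.ofReal (Real.exp (-(v^4/2)))
                    * ENNReal.ofReal (Real.exp (-(3*u^2*v^2)) * (10 / Real.sqrt |u|)) := by
                    rw [ENNReal.ofReal_mul (Real.exp_pos _).le, mul_assoc,
                      ← ENNReal.ofReal_mul (Real.exp_pos _).le]
          _ = ENNReal.ofReal (Real.exp (-(v^4/2)))
              * ∫⁻ u : ℝ, ENNReal.ofReal (Real.exp (-(3*u^2*v^2)) * (10 / Real.sqrt |u|)) :=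
              lintegral_const_mul' _ _ ENNReal.ofReal_ne_top
          _ = ENNReal.ofReal (Real.exp (-(v^4/2))) * ENNReal.ofReal (10 * C3 / Real.sqrt |v|) := by
              rw [lemB hv]
          _ = ENNReal.ofReal (Real.exp (-(v^4/2)) * (10 * C3 / Real.sqrt |v|)) :=
              (ENNReal.ofReal_mul (Real.exp_pos _).le).symm
    _ < ⊤ := by
        have hi : Integrable (fun v : ℝ => Real.exp (-(v^4/2)) * (10 * C3 / Real.sqrt |v|)) := by
          have h := (L1 (b := 1/2) (by norm_num) (k := 4) (by norm_num)).const_mul (10 * C3)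
          refine h.congr (ae_of_all _ fun v => ?_)
          have habs : |v|^4 = v^4 := by rw [← abs_pow, abs_of_nonneg (by positivity)]
          dsimp only
          rw [habs, show -(1/2 * v^4) = -(v^4/2) by ring]
          ring
        rw [← ofReal_integral_eq_lintegral_ofReal hi (ae_of_all _ fun v =>
          mul_nonneg (Real.exp_pos _).le
            (div_nonneg (by nlinarith [C3_nonneg]) (Real.sqrt_nonneg _)))]
        exact ENNReal.ofReal_lt_top

end Stmt8Aux

open Stmt8Aux in
/-- Lemma 2.3 (4) of the paper (the key example): `G₁(g)` for
`g(x,y,z) = x⁴+y⁴+z⁴-2√2 x²yz` contains the lines `{y = z, x = ±2^{1/4}y}`, hence it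
is unbounded, yet it has finite volume; equivalently `∫ exp(-g) < ∞`. -/
theorem stmt_8 :
    (∀ s : ℝ, g8 ![(2 : ℝ) ^ ((1 : ℝ) / 4) * s, s, s] ≤ 1 ∧
      g8 ![-((2 : ℝ) ^ ((1 : ℝ) / 4)) * s, s, s] ≤ 1) ∧
    ¬ Bornology.IsBounded {p : Fin 3 → ℝ | g8 p ≤ 1} ∧
    volume {p : Fin 3 → ℝ | g8 p ≤ 1} < ⊤ ∧
    Integrable (fun p : Fin 3 → ℝ => Real.exp (-g8 p)) := by
  have hint := main_integrable
  refine ⟨?_, ?_, ?_, hint⟩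
  · intro s
    constructor
    · rw [g8_line s _ q_sq]; norm_num
    · rw [g8_line s _ (by rw [neg_pow]; simpa using q_sq)]; norm_num
  · intro hb
    obtain ⟨C, hC⟩ := isBounded_iff_forall_norm_le.mp hb
    set s : ℝ := |C| + 1 with hs
    have hmem : (![(2 : ℝ) ^ ((1 : ℝ) / 4) * s, s, s]) ∈ {p : Fin 3 → ℝ | g8 p ≤ 1} := by
      rw [Set.mem_setOf_eq, g8_line s _ q_sq]; norm_num
    have h1 := hC _ hmem
    have h2 : |s| ≤ ‖![(2 : ℝ) ^ ((1 : ℝ) / 4) * s, s, s]‖ := by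
      have := norm_le_pi_norm (![(2 : ℝ) ^ ((1 : ℝ) / 4) * s, s, s]) 1
      simpa using this
    have hspos : (0:ℝ) < s := by positivity
    rw [abs_of_pos hspos] at h2
    have : C < s := by
      calc C ≤ |C| := le_abs_self C
      _ < s := by rw [hs]; linarith
    linarith
  · -- finite volume from integrability (Markov)
    have hcontg : Continuous g8 := by unfold g8; fun_prop
    have hmeas : AEMeasurable (fun p : Fin 3 → ℝ => ENNReal.ofReal (Real.exp (-g8 p))) volume :=
      ((Real.continuous_exp.comp hcontg.neg).measurable.ennreal_ofReal).aemeasurable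
    have hset : {p : Fin 3 → ℝ | g8 p ≤ 1}
        = {p : Fin 3 → ℝ | ENNReal.ofReal (Real.exp (-1:ℝ))
            ≤ ENNReal.ofReal (Real.exp (-g8 p))} := by
      ext p
      simp only [Set.mem_setOf_eq]
      rw [ENNReal.ofReal_le_ofReal_iff (Real.exp_pos _).le, Real.exp_le_exp]
      constructor <;> intro h <;> linarith
    rw [hset]
    refine lt_of_le_of_lt (meas_ge_le_lintegral_div hmeas
      (by simp [Real.exp_pos]) ENNReal.ofReal_ne_top) ?_
    apply ENNReal.div_lt_top
    · have h := hint.hasFiniteIntegral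
      rw [hasFiniteIntegral_iff_ofReal (ae_of_all _ fun p => (Real.exp_pos _).le)] at h
      exact h.ne
    · simp [Real.exp_pos]
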